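/- (Demand-reduction example; PoA_0 ≥ 4/3 for the English Walrasian mechanism.) Let n = 2 agents and m = 2 items, and fix 0 < ε < 1. Define valuations v_1(S) = (1+ε) if S ≠ ∅ and v_1(∅) = 0, and v_2(S) = 2·|S|. Define bids b_1 = v_1 and b_2(S) = 2 if item 1 ∈ S, else 0. Then v_1, v_2, b_1, b_2 are all gross substitutes valuations; for every English Walrasian mechanism with bid space equal to the GS valuations, the profile (b_1, b_2) is a pure Nash equilibrium for (v_1, v_2) in which both bids are non-exposure bids; the equilibrium allocation assigns item 1 to agent 2 and item 2 to agent 1, with welfare ∑_i v_i(X_i(b)) = 3 + ε, while OPT(v) = 4. -/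

import Mathlib

open Finset

/-- A valuation on `m` items: normalized at `∅`, monotone, nonnegative. -/
def IsValuation {m : ℕ} (v : Finset (Fin m) → ℝ) : Prop :=
  v ∅ = 0 ∧ (∀ S T : Finset (Fin m), S ⊆ T → v S ≤ v T) ∧ (∀ S, 0 ≤ v S)

/-- `S` is in the demand set of valuation `v` at prices `p`. -/
def InDemand {m : ℕ} (v : Finset (Fin m) → ℝ) (p : Fin m → ℝ) (S : Finset (Fin m)) : Prop :=
  ∀ T : Finset (Fin m), v T - ∑ j ∈ T, p j ≤ v S - ∑ j ∈ S, p j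

/-- Gross substitutes valuations. -/
def IsGS {m : ℕ} (v : Finset (Fin m) → ℝ) : Prop :=
  IsValuation v ∧
    ∀ p q : Fin m → ℝ, (∀ j, p j ≤ q j) →
      ∀ S : Finset (Fin m), InDemand v p S →
        ∃ T : Finset (Fin m), InDemand v q T ∧ ∀ j ∈ S, p j = q j → j ∈ T

/-- Additive valuations. -/
def IsAdditive {m : ℕ} (v : Finset (Fin m) → ℝ) : Prop :=
  ∃ w : Fin m → ℝ, (∀ j, 0 ≤ w j) ∧ ∀ S : Finset (Fin m), v S = ∑ j ∈ S, w j

/-- XOS valuations: a max over a nonempty finite family of nonnegative additive valuations. -/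
def IsXOS {m : ℕ} (v : Finset (Fin m) → ℝ) : Prop :=
  ∃ (k : ℕ) (w : Fin (k + 1) → Fin m → ℝ),
    (∀ i j, 0 ≤ w i j) ∧
    ∀ S : Finset (Fin m),
      v S = Finset.univ.sup' Finset.univ_nonempty (fun i => ∑ j ∈ S, w i j)

def GSvals (m : ℕ) : Set (Finset (Fin m) → ℝ) := {u | IsGS u}
def XOSvals (m : ℕ) : Set (Finset (Fin m) → ℝ) := {u | IsXOS u}

/-- The welfare `W^b(S)`: the maximum of `∑ i, b i (X i)` over allocations (pairwise disjoint
tuples of subsets) contained in `S`. -/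
noncomputable def W {n m : ℕ} (b : Fin n → Finset (Fin m) → ℝ) (S : Finset (Fin m)) : ℝ :=
  sSup {t : ℝ | ∃ X : Fin n → Finset (Fin m),
    (∀ i j : Fin n, i ≠ j → Disjoint (X i) (X j)) ∧ (∀ i, X i ⊆ S) ∧ t = ∑ i, b i (X i)}

/-- The welfare `W^{b₋ᵢ}(S)` with agent `i` omitted. -/
noncomputable def Wminus {n m : ℕ} (b : Fin n → Finset (Fin m) → ℝ) (i : Fin n)
    (S : Finset (Fin m)) : ℝ :=
  sSup {t : ℝ | ∃ X : Fin n → Finset (Fin m),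
    (∀ k l : Fin n, k ≠ l → Disjoint (X k) (X l)) ∧ (∀ k, X k ⊆ S) ∧
    t = ∑ k ∈ Finset.univ.erase i, b k (X k)}

/-- The welfare `W^b(x)` for a multiplicity vector `x : Fin m → ℕ`: maximum of `∑ i, b i (X i)`
over tuples of sets in which each item `j` is used at most `x j` times. -/
noncomputable def Wmult {n m : ℕ} (b : Fin n → Finset (Fin m) → ℝ) (x : Fin m → ℕ) : ℝ :=
  sSup {t : ℝ | ∃ X : Fin n → Finset (Fin m),
    (∀ j : Fin m, (Finset.univ.filter fun i => j ∈ X i).card ≤ x j) ∧ t = ∑ i, b i (X i)}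

/-- The optimal welfare for the true valuations. -/
noncomputable def OPT {n m : ℕ} (v : Fin n → Finset (Fin m) → ℝ) : ℝ := W v Finset.univ

/-- A mechanism: allocation and payment maps on bid profiles. -/
structure Mechanism (n m : ℕ) where
  alloc : (Fin n → Finset (Fin m) → ℝ) → Fin n → Finset (Fin m)
  pay : (Fin n → Finset (Fin m) → ℝ) → Fin n → ℝ

/-- A bid profile lies in the bid space `B`. -/
def InBidSpace {n m : ℕ} (B : Set (Finset (Fin m) → ℝ))
    (b : Fin n → Finset (Fin m) → ℝ) : Prop :=
  ∀ i, b i ∈ B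

/-- On bid profiles from `B`, the allocation is pairwise disjoint. -/
def AllocDisjoint {n m : ℕ} (M : Mechanism n m) (B : Set (Finset (Fin m) → ℝ)) : Prop :=
  ∀ b, InBidSpace B b → ∀ i j : Fin n, i ≠ j → Disjoint (M.alloc b i) (M.alloc b j)

/-- On bid profiles from `B`, payments are nonnegative. -/
def PayNonneg {n m : ℕ} (M : Mechanism n m) (B : Set (Finset (Fin m) → ℝ)) : Prop :=
  ∀ b, InBidSpace B b → ∀ i, 0 ≤ M.pay b i

/-- The utility of agent `i` with true valuation `v` under bid profile `b`. -/
noncomputable def util {n m : ℕ} (M : Mechanism n m) (v : Finset (Fin m) → ℝ) (i : Fin n)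
    (b : Fin n → Finset (Fin m) → ℝ) : ℝ :=
  v (M.alloc b i) - M.pay b i

/-- Declared welfare maximizer. -/
def IsDWM {n m : ℕ} (M : Mechanism n m) (B : Set (Finset (Fin m) → ℝ)) : Prop :=
  (∀ b, InBidSpace B b → ∑ i, b i (M.alloc b i) = W b Finset.univ) ∧
  (∀ b, InBidSpace B b → ∀ i, M.pay b i ≤ b i (M.alloc b i)) ∧
  (∀ b, InBidSpace B b → ∀ i : Fin n, ∃ b' : Fin n → Finset (Fin m) → ℝ,
    InBidSpace B b' ∧ b' i = b i ∧ M.alloc b' i = M.alloc b i ∧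
    M.pay b' i = b i (M.alloc b i))

/-- English Walrasian mechanism: welfare-maximizing allocation w.r.t. the bids, with
payments given by the minimum Walrasian prices `W^b(𝟙 + e_j) − W^b(𝟙)`. -/
def IsEnglish {n m : ℕ} (M : Mechanism n m) (B : Set (Finset (Fin m) → ℝ)) : Prop :=
  (∀ b, InBidSpace B b → ∑ i, b i (M.alloc b i) = W b Finset.univ) ∧
  (∀ b, InBidSpace B b → ∀ i, M.pay b i =
    ∑ j ∈ M.alloc b i,
      (Wmult b (fun k => if k = j then 2 else 1) - Wmult b (fun _ => 1)))

/-- VCG mechanism: welfare-maximizing allocation w.r.t. the bids, with externality payments. -/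
def IsVCG {n m : ℕ} (M : Mechanism n m) (B : Set (Finset (Fin m) → ℝ)) : Prop :=
  (∀ b, InBidSpace B b → ∑ i, b i (M.alloc b i) = W b Finset.univ) ∧
  (∀ b, InBidSpace B b → ∀ i, M.pay b i =
    Wminus b i Finset.univ - Wminus b i (Finset.univ \ M.alloc b i))

/-- Bid `bi` of agent `i` with true valuation `v` has exposure factor `γ`. -/
def HasExposureFactor {n m : ℕ} (M : Mechanism n m) (B : Set (Finset (Fin m) → ℝ))
    (v : Finset (Fin m) → ℝ) (i : Fin n) (bi : Finset (Fin m) → ℝ) (γ : ℝ) : Prop :=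
  ∀ b : Fin n → Finset (Fin m) → ℝ, InBidSpace B b → b i = bi →
    M.pay b i ≤ (1 + γ) * v (M.alloc b i)

/-- `b` is a pure Nash equilibrium for true valuations `v`. -/
noncomputable def IsNash {n m : ℕ} (M : Mechanism n m) (B : Set (Finset (Fin m) → ℝ))
    (v b : Fin n → Finset (Fin m) → ℝ) : Prop :=
  InBidSpace B b ∧
  ∀ i : Fin n, ∀ bi' ∈ B, util M (v i) i (Function.update b i bi') ≤ util M (v i) i b

/-- A finitely supported probability distribution. -/
structure FinDist (α : Type*) where
  supp : Finset α
  μ : α → ℝ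
  nonneg : ∀ a, 0 ≤ μ a
  sum_one : ∑ a ∈ supp, μ a = 1

/-- Expectation of `f` under a finitely supported distribution. -/
noncomputable def FinDist.exp {α : Type*} (D : FinDist α) (f : α → ℝ) : ℝ :=
  ∑ a ∈ D.supp, D.μ a * f a

/-- Bayes-Nash equilibrium: strategies map types in `V` to bids in `B`, and no unilateral
deviation (depending only on the agent's own type) improves expected utility. -/
noncomputable def IsBNE {n m : ℕ} (M : Mechanism n m) (V B : Set (Finset (Fin m) → ℝ))
    (D : FinDist (Fin n → Finset (Fin m) → ℝ))
    (s : Fin n → (Finset (Fin m) → ℝ) → Finset (Fin m) → ℝ) : Prop :=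
  (∀ i : Fin n, ∀ vi ∈ V, s i vi ∈ B) ∧
  ∀ i : Fin n, ∀ s' : (Finset (Fin m) → ℝ) → Finset (Fin m) → ℝ, (∀ vi ∈ V, s' vi ∈ B) →
    D.exp (fun v => util M (v i) i (Function.update (fun k => s k (v k)) i (s' (v i)))) ≤
    D.exp (fun v => util M (v i) i (fun k => s k (v k)))

/-- Strategy `si` of agent `i` has exposure factor `γ` under distribution `D`. -/
noncomputable def BayesExposure {n m : ℕ} (M : Mechanism n m)
    (V B : Set (Finset (Fin m) → ℝ)) (D : FinDist (Fin n → Finset (Fin m) → ℝ)) (i : Fin n)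
    (si : (Finset (Fin m) → ℝ) → Finset (Fin m) → ℝ) (γ : ℝ) : Prop :=
  ∀ c : (Finset (Fin m) → ℝ) → Fin n → Finset (Fin m) → ℝ,
    (∀ vi ∈ V, InBidSpace B (c vi) ∧ c vi i = si vi) →
    D.exp (fun v => M.pay (c (v i)) i) ≤
      (1 + γ) * D.exp (fun v => (v i) (M.alloc (c (v i)) i))

/-- True valuation of agent 1: unit-demand with value 1+ε for any nonempty set. -/
noncomputable def exV1 (ε : ℝ) : Finset (Fin 2) → ℝ := fun S => if S.Nonempty then 1 + ε else 0

/-- True valuation of agent 2: additive with value 2 per item. -/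
noncomputable def exV2 : Finset (Fin 2) → ℝ := fun S => 2 * (S.card : ℝ)

/-- Demand-reduced bid of agent 2: value 2 on sets containing item 1 (index 0), else 0. -/
noncomputable def exB2 : Finset (Fin 2) → ℝ := fun S => if (0 : Fin 2) ∈ S then 2 else 0


section Aux
open Finset

/-! ### Generic sSup machinery -/

lemma genFinite {α : Type*} [Finite α] (P : α → Prop) (f : α → ℝ) :
    {t : ℝ | ∃ y, P y ∧ t = f y}.Finite :=
  (Set.finite_range f).subset (by rintro t ⟨y, _, rfl⟩; exact ⟨y, rfl⟩)

lemma genFinite2 {α : Type*} [Finite α] (P Q : α → Prop) (f : α → ℝ) :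
    {t : ℝ | ∃ y, P y ∧ Q y ∧ t = f y}.Finite :=
  (Set.finite_range f).subset (by rintro t ⟨y, _, _, rfl⟩; exact ⟨y, rfl⟩)

lemma le_sSup' {s : Set ℝ} (h : s.Finite) {t : ℝ} (ht : t ∈ s) : t ≤ sSup s :=
  le_csSup h.bddAbove ht

lemma sSup_le' {s : Set ℝ} (hne : s.Nonempty) {c : ℝ} (h : ∀ t ∈ s, t ≤ c) : sSup s ≤ c :=
  csSup_le hne h

/-! ### Demand lemmas -/

lemma demand_exists {m : ℕ} (v : Finset (Fin m) → ℝ) (q : Fin m → ℝ) :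
    ∃ T, InDemand v q T := by
  obtain ⟨T, -, hT⟩ := Finset.exists_max_image (univ : Finset (Finset (Fin m)))
    (fun T => v T - ∑ j ∈ T, q j) ⟨∅, mem_univ _⟩
  exact ⟨T, fun T' => hT T' (mem_univ _)⟩

lemma demand_same_prices {m : ℕ} {v : Finset (Fin m) → ℝ} {p q : Fin m → ℝ}
    {S : Finset (Fin m)} (hpq : ∀ j, p j ≤ q j) (hSq : ∀ j ∈ S, p j = q j)
    (hS : InDemand v p S) : InDemand v q S := by
  intro T
  have h1 : ∑ j ∈ T, p j ≤ ∑ j ∈ T, q j := Finset.sum_le_sum fun j _ => hpq j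
  have h2 : ∑ j ∈ S, q j = ∑ j ∈ S, p j := Finset.sum_congr rfl fun j hj => (hSq j hj).symm
  have := hS T
  linarith

lemma demand_insert_nonpos {m : ℕ} {v : Finset (Fin m) → ℝ}
    (hmono : ∀ S T : Finset (Fin m), S ⊆ T → v S ≤ v T) {q : Fin m → ℝ}
    {T : Finset (Fin m)} (hT : InDemand v q T) {j : Fin m} (hj : q j ≤ 0) :
    InDemand v q (insert j T) := by
  intro T'
  refine (hT T').trans ?_
  have hv := hmono T (insert j T) (subset_insert j T)
  by_cases hjT : j ∈ T
  · rw [insert_eq_self.2 hjT]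
  · rw [Finset.sum_insert hjT]; linarith

lemma demand_union_nonpos {m : ℕ} {v : Finset (Fin m) → ℝ}
    (hmono : ∀ S T : Finset (Fin m), S ⊆ T → v S ≤ v T) {q : Fin m → ℝ}
    {T : Finset (Fin m)} (hT : InDemand v q T) (R : Finset (Fin m))
    (hR : ∀ j ∈ R, q j ≤ 0) : InDemand v q (R ∪ T) := by
  induction R using Finset.induction_on with
  | empty => simpa using hT
  | @insert a R ha ih =>
      rw [insert_union]
      exact demand_insert_nonpos hmono (ih fun j hj => hR j (mem_insert_of_mem hj))
        (hR a (mem_insert_self a R))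

/-! ### Additive valuations are GS -/

lemma additive_isGS {m : ℕ} (w : Fin m → ℝ) (hw : ∀ j, 0 ≤ w j) :
    IsGS (fun S => ∑ j ∈ S, w j) := by
  constructor
  · refine ⟨Finset.sum_empty, fun S T hST => Finset.sum_le_sum_of_subset_of_nonneg hST
      (fun j _ _ => hw j), fun S => Finset.sum_nonneg fun j _ => hw j⟩
  · intro p q hpq S hS
    refine ⟨univ.filter (fun j => q j ≤ w j), ?_, ?_⟩
    · intro T'
      have key : ∀ U : Finset (Fin m), (∑ j ∈ U, w j) - ∑ j ∈ U, q j = ∑ j ∈ U, (w j - q j) :=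
        fun U => (Finset.sum_sub_distrib _ _).symm
      rw [key, key]
      set T := univ.filter (fun j => q j ≤ w j) with hTdef
      have h1 : ∑ j ∈ T', (w j - q j) = ∑ j ∈ T' ∩ T, (w j - q j) + ∑ j ∈ T' \ T, (w j - q j) :=
        (Finset.sum_inter_add_sum_sdiff T' T _).symm
      have h2 : ∑ j ∈ T' \ T, (w j - q j) ≤ 0 := by
        refine Finset.sum_nonpos fun j hj => ?_
        have := (Finset.mem_sdiff.1 hj).2
        simp only [hTdef, mem_filter, mem_univ, true_and] at this
        linarith [not_le.1 this]
      have h3 : ∑ j ∈ T' ∩ T, (w j - q j) ≤ ∑ j ∈ T, (w j - q j) := by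
        refine Finset.sum_le_sum_of_subset_of_nonneg (inter_subset_right) fun j hj _ => ?_
        simp only [hTdef, mem_filter, mem_univ, true_and] at hj
        linarith
      linarith
    · intro j hjS hpj
      simp only [mem_filter, mem_univ, true_and]
      have := hS (S.erase j)
      have herase : ∑ x ∈ S.erase j, w x + w j = ∑ x ∈ S, w x := Finset.sum_erase_add S w hjS
      have herase' : ∑ x ∈ S.erase j, p x + p j = ∑ x ∈ S, p x := Finset.sum_erase_add S p hjS
      rw [← hpj]
      linarith

/-! ### Finset (Fin 2) case analysis -/

lemma finset2_cases (S : Finset (Fin 2)) : S = ∅ ∨ S = {0} ∨ S = {1} ∨ S = {0,1} := by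
  revert S; decide

lemma sum_pair01 (f : Fin 2 → ℝ) : ∑ j ∈ ({0,1} : Finset (Fin 2)), f j = f 0 + f 1 :=
  Finset.sum_pair (by decide)

/-! ### GS implies pair subadditivity on two items -/

lemma gs_subadd {v : Finset (Fin 2) → ℝ} (hv : IsGS v) : v {0,1} ≤ v {0} + v {1} := by
  obtain ⟨⟨hemp, hmono, hnn⟩, hgs⟩ := hv
  by_contra hcon
  push_neg at hcon
  set a := v {0} with ha'; set b := v {1} with hb'; set c := v ({0,1} : Finset (Fin 2)) with hc'
  set δ := (c - a - b) / 2 with hδ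
  have hδpos : 0 < δ := by simp only [hδ]; linarith
  have ha : 0 ≤ a := hnn _
  have hb : 0 ≤ b := hnn _
  have hbc : b ≤ c := hmono {1} {0,1} (by decide)
  set p : Fin 2 → ℝ := fun j => if j = 0 then a + δ else b + δ with hp
  set q : Fin 2 → ℝ := fun j => if j = 0 then a + δ else c + 1 with hq
  have hp0 : p 0 = a + δ := by simp [hp]
  have hp1 : p 1 = b + δ := by simp [hp]
  have hq0 : q 0 = a + δ := by simp [hq]
  have hq1 : q 1 = c + 1 := by simp [hq]
  have hpq : ∀ j, p j ≤ q j := by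
    intro j
    fin_cases j
    · rw [show (⟨0, by omega⟩ : Fin 2) = 0 from rfl, hp0, hq0]
    · rw [show (⟨1, by omega⟩ : Fin 2) = 1 from rfl, hp1, hq1]; linarith
  have hdem : InDemand v p {0,1} := by
    intro T
    rw [sum_pair01 p, hp0, hp1]
    rcases finset2_cases T with rfl | rfl | rfl | rfl
    · rw [Finset.sum_empty, hemp]; linarith
    · rw [Finset.sum_singleton, hp0]; linarith
    · rw [Finset.sum_singleton, hp1]; linarith
    · rw [sum_pair01 p, hp0, hp1]
  obtain ⟨T, hT, hret⟩ := hgs p q hpq {0,1} hdem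
  have h0T : (0 : Fin 2) ∈ T := hret 0 (by decide) (by rw [hp0, hq0])
  have hTcmp := hT ∅
  rw [Finset.sum_empty, hemp] at hTcmp
  rcases finset2_cases T with rfl | rfl | rfl | rfl
  · exact absurd h0T (by decide)
  · rw [Finset.sum_singleton, hq0] at hTcmp; linarith
  · exact absurd h0T (by decide)
  · rw [sum_pair01 q, hq0, hq1] at hTcmp; linarith

/-! ### The example valuations -/

lemma exV1_empty (ε : ℝ) : exV1 ε ∅ = 0 := by simp [exV1]
lemma exV1_s0 (ε : ℝ) : exV1 ε {0} = 1 + ε := by simp [exV1]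
lemma exV1_s1 (ε : ℝ) : exV1 ε {1} = 1 + ε := by simp [exV1]
lemma exV1_pair (ε : ℝ) : exV1 ε {0,1} = 1 + ε := by simp [exV1]
lemma exV1_le (ε : ℝ) (hε : 0 ≤ ε) (S : Finset (Fin 2)) : exV1 ε S ≤ 1 + ε := by
  unfold exV1; split <;> linarith
lemma exV1_nonneg (ε : ℝ) (hε : 0 ≤ ε) (S : Finset (Fin 2)) : 0 ≤ exV1 ε S := by
  unfold exV1; split <;> linarith

lemma exB2_empty : exB2 ∅ = 0 := by simp [exB2]
lemma exB2_s0 : exB2 {0} = 2 := by simp [exB2]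
lemma exB2_s1 : exB2 {1} = 0 := by norm_num [exB2]
lemma exB2_pair : exB2 {0,1} = 2 := by simp [exB2]
lemma exB2_le (S : Finset (Fin 2)) : exB2 S ≤ 2 := by unfold exB2; split <;> norm_num
lemma exB2_nonneg (S : Finset (Fin 2)) : 0 ≤ exB2 S := by unfold exB2; split <;> norm_num

lemma exV2_empty : exV2 ∅ = 0 := by simp [exV2]
lemma exV2_s0 : exV2 {0} = 2 := by simp [exV2]
lemma exV2_s1 : exV2 {1} = 2 := by simp [exV2]
lemma exV2_pair : exV2 {0,1} = 4 := by norm_num [exV2]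
lemma exV2_card (S : Finset (Fin 2)) : exV2 S = 2 * (S.card : ℝ) := rfl

lemma exV1_mono (ε : ℝ) (hε : 0 ≤ ε) :
    ∀ S T : Finset (Fin 2), S ⊆ T → exV1 ε S ≤ exV1 ε T := by
  intro S T hST
  unfold exV1
  by_cases hS : S.Nonempty
  · rw [if_pos hS, if_pos (hS.mono hST)]
  · rw [if_neg hS]; split <;> linarith

lemma exV1_isGS (ε : ℝ) (hε : 0 < ε) : IsGS (exV1 ε) := by
  refine ⟨⟨by simp [exV1], exV1_mono ε hε.le, exV1_nonneg ε hε.le⟩, ?_⟩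
  intro p q hpq S hS
  by_cases hall : ∀ j ∈ S, p j = q j
  · exact ⟨S, demand_same_prices hpq hall hS, fun j hj _ => hj⟩
  · push_neg at hall
    obtain ⟨k, hkS, hk⟩ := hall
    set R := S.filter (fun j => p j = q j) with hR
    have hRle : ∀ j ∈ R, q j ≤ 0 := by
      intro j hj
      rw [hR, mem_filter] at hj
      obtain ⟨hjS, hpj⟩ := hj
      have hjk : j ≠ k := fun h => hk (h ▸ hpj)
      have hkerase : k ∈ S.erase j := mem_erase.2 ⟨(Ne.symm hjk), hkS⟩
      have h1 := hS (S.erase j)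
      have h2 : exV1 ε (S.erase j) = 1 + ε := if_pos ⟨k, hkerase⟩
      have h3 : exV1 ε S = 1 + ε := if_pos ⟨k, hkS⟩
      have h4 : ∑ x ∈ S.erase j, p x + p j = ∑ x ∈ S, p x := Finset.sum_erase_add S p hjS
      rw [h2, h3] at h1
      linarith [hpq j]
    obtain ⟨T, hT⟩ := demand_exists (exV1 ε) q
    refine ⟨R ∪ T, demand_union_nonpos (exV1_mono ε hε.le) hT R hRle, ?_⟩
    intro j hjS hpj
    exact mem_union_left T (mem_filter.2 ⟨hjS, hpj⟩)

lemma exV2_isGS : IsGS exV2 := by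
  have : exV2 = fun S => ∑ _j ∈ S, (2:ℝ) := by
    funext S
    simp [exV2, Finset.sum_const, nsmul_eq_mul, mul_comm]
  rw [this]
  exact additive_isGS _ (fun _ => by norm_num)

lemma exB2_isGS : IsGS exB2 := by
  have : exB2 = fun S => ∑ j ∈ S, (if j = 0 then (2:ℝ) else 0) := by
    funext S
    rw [Finset.sum_ite_eq' S 0 (fun _ => (2:ℝ))]
    rfl
  rw [this]
  refine additive_isGS _ (fun j => ?_)
  split <;> norm_num

/-! ### Wmult / W machinery for two agents, two items -/

lemma mult_one_iff {n m : ℕ} (X : Fin n → Finset (Fin m)) :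
    (∀ j, ((univ : Finset (Fin n)).filter fun i => j ∈ X i).card ≤ 1) ↔
      (∀ i k : Fin n, i ≠ k → Disjoint (X i) (X k)) := by
  constructor
  · intro h i k hik
    rw [Finset.disjoint_left]
    intro a ha hak
    have hsub : ({i, k} : Finset (Fin n)) ⊆ univ.filter (fun l => a ∈ X l) := by
      intro x hx
      rcases Finset.mem_insert.1 hx with rfl | hx
      · exact mem_filter.2 ⟨mem_univ _, ha⟩
      · rw [Finset.mem_singleton.1 hx]
        exact mem_filter.2 ⟨mem_univ _, hak⟩
    have := (Finset.card_le_card hsub).trans (h a)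
    rw [Finset.card_pair hik] at this
    omega
  · intro h j
    by_contra hcon
    push_neg at hcon
    obtain ⟨a, ha, bb, hbb, hab⟩ := Finset.one_lt_card.1 hcon
    exact Finset.disjoint_left.1 (h a bb hab) (mem_filter.1 ha).2 (mem_filter.1 hbb).2

lemma Wmult_one_eq_W {n m : ℕ} (b : Fin n → Finset (Fin m) → ℝ) :
    Wmult b (fun _ => 1) = W b univ := by
  unfold Wmult W
  congr 1
  ext t
  constructor
  · rintro ⟨X, hX, rfl⟩
    exact ⟨X, (mult_one_iff X).1 hX, fun i => subset_univ _, rfl⟩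
  · rintro ⟨X, hX, -, rfl⟩
    exact ⟨X, (mult_one_iff X).2 hX, rfl⟩

lemma Wmult_nonempty {n m : ℕ} (b : Fin n → Finset (Fin m) → ℝ) (x : Fin m → ℕ) :
    {t : ℝ | ∃ X : Fin n → Finset (Fin m),
      (∀ j : Fin m, (Finset.univ.filter fun i => j ∈ X i).card ≤ x j) ∧
      t = ∑ i, b i (X i)}.Nonempty := by
  refine ⟨∑ i, b i ∅, ?_⟩
  simp only [Set.mem_setOf_eq]
  exact ⟨fun _ => ∅, fun j => by simp, rfl⟩

lemma Wmult_le {n m : ℕ} {b : Fin n → Finset (Fin m) → ℝ} {x : Fin m → ℕ} {C : ℝ}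
    (h : ∀ X : Fin n → Finset (Fin m),
      (∀ j : Fin m, (Finset.univ.filter fun i => j ∈ X i).card ≤ x j) →
      (∑ i, b i (X i)) ≤ C) : Wmult b x ≤ C := by
  refine sSup_le' (Wmult_nonempty b x) ?_
  rintro t ⟨X, hX, rfl⟩
  exact h X hX

lemma Wmult_ge {n m : ℕ} {b : Fin n → Finset (Fin m) → ℝ} {x : Fin m → ℕ}
    (X : Fin n → Finset (Fin m))
    (hX : ∀ j : Fin m, (Finset.univ.filter fun i => j ∈ X i).card ≤ x j) :
    (∑ i, b i (X i)) ≤ Wmult b x := by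
  have hm : (∑ i, b i (X i)) ∈ {t : ℝ | ∃ X : Fin n → Finset (Fin m),
      (∀ j : Fin m, (Finset.univ.filter fun i => j ∈ X i).card ≤ x j) ∧
      t = ∑ i, b i (X i)} := ⟨X, hX, rfl⟩
  exact le_sSup' (genFinite _ _) hm

lemma W_le {n m : ℕ} {b : Fin n → Finset (Fin m) → ℝ} {S : Finset (Fin m)} {C : ℝ}
    (h : ∀ X : Fin n → Finset (Fin m), (∀ i j : Fin n, i ≠ j → Disjoint (X i) (X j)) →
      (∀ i, X i ⊆ S) → (∑ i, b i (X i)) ≤ C) : W b S ≤ C := by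
  have hne : {t : ℝ | ∃ X : Fin n → Finset (Fin m),
      (∀ i j : Fin n, i ≠ j → Disjoint (X i) (X j)) ∧ (∀ i, X i ⊆ S) ∧
      t = ∑ i, b i (X i)}.Nonempty :=
    ⟨∑ i, b i ∅, fun _ => ∅, fun i j _ => disjoint_bot_left, fun i => empty_subset S, rfl⟩
  refine sSup_le' hne ?_
  rintro t ⟨X, h1, h2, rfl⟩
  exact h X h1 h2

lemma W_ge {n m : ℕ} {b : Fin n → Finset (Fin m) → ℝ} {S : Finset (Fin m)}
    (X : Fin n → Finset (Fin m)) (h1 : ∀ i j : Fin n, i ≠ j → Disjoint (X i) (X j))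
    (h2 : ∀ i, X i ⊆ S) : (∑ i, b i (X i)) ≤ W b S := by
  have hm : (∑ i, b i (X i)) ∈ {t : ℝ | ∃ X : Fin n → Finset (Fin m),
      (∀ i j : Fin n, i ≠ j → Disjoint (X i) (X j)) ∧ (∀ i, X i ⊆ S) ∧
      t = ∑ i, b i (X i)} := ⟨X, h1, h2, rfl⟩
  exact le_sSup' (genFinite2 _ _ _) hm

/-- The key price bound: removing item `j` from agent `i0`'s bundle costs at most `C`. -/
lemma price_le {b : Fin 2 → Finset (Fin 2) → ℝ} {j : Fin 2} (i0 : Fin 2) {C : ℝ}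
    (hrm : ∀ A : Finset (Fin 2), b i0 A ≤ b i0 (A.erase j) + C) :
    Wmult b (fun k => if k = j then 2 else 1) - Wmult b (fun _ => 1) ≤ C := by
  rw [sub_le_iff_le_add]
  refine Wmult_le fun X hX => ?_
  set X' : Fin 2 → Finset (Fin 2) := Function.update X i0 ((X i0).erase j) with hX'
  have hfeas : ∀ k : Fin 2, ((univ : Finset (Fin 2)).filter fun i => k ∈ X' i).card ≤ 1 := by
    intro k
    by_cases hkj : k = j
    · subst hkj
      have hsub : ((univ : Finset (Fin 2)).filter fun i => k ∈ X' i) ⊆ univ.erase i0 := by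
        intro i hi
        rw [Finset.mem_erase]
        refine ⟨fun h => ?_, mem_univ _⟩
        subst h
        have := (mem_filter.1 hi).2
        rw [hX', Function.update_self] at this
        exact (Finset.notMem_erase k _) this
      calc ((univ : Finset (Fin 2)).filter fun i => k ∈ X' i).card
          ≤ (univ.erase i0).card := Finset.card_le_card hsub
        _ = 1 := by rw [Finset.card_erase_of_mem (mem_univ _)]; simp
    · have hsub : ((univ : Finset (Fin 2)).filter fun i => k ∈ X' i) ⊆
          univ.filter fun i => k ∈ X i := by
        intro i hi
        have hmem := (mem_filter.1 hi).2
        refine mem_filter.2 ⟨mem_univ _, ?_⟩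
        by_cases hi0 : i = i0
        · subst hi0
          rw [hX', Function.update_self] at hmem
          exact Finset.mem_of_mem_erase hmem
        · rwa [hX', Function.update_of_ne hi0] at hmem
      have := hX k
      rw [if_neg hkj] at this
      exact (Finset.card_le_card hsub).trans this
  have hmem : (∑ i, b i (X' i)) ≤ Wmult b (fun _ => 1) := Wmult_ge X' hfeas
  have hsum : (∑ i, b i (X i)) ≤ (∑ i, b i (X' i)) + C := by
    have e1 : b i0 (X i0) + ∑ i ∈ univ.erase i0, b i (X i) = ∑ i, b i (X i) :=
      Finset.add_sum_erase univ (fun i => b i (X i)) (mem_univ i0)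
    have e2 : b i0 (X' i0) + ∑ i ∈ univ.erase i0, b i (X' i) = ∑ i, b i (X' i) :=
      Finset.add_sum_erase univ (fun i => b i (X' i)) (mem_univ i0)
    have e3 : ∑ i ∈ univ.erase i0, b i (X' i) = ∑ i ∈ univ.erase i0, b i (X i) :=
      Finset.sum_congr rfl fun i hi => by
        rw [hX', Function.update_of_ne (Finset.mem_erase.1 hi).1]
    have e4 : X' i0 = (X i0).erase j := Function.update_self _ _ _
    have := hrm (X i0)
    rw [e4] at e2
    linarith
  linarith

end Aux

/-- demand reduction; PoA₀ ≥ 4/3 for the English Walrasian mechanism: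
with true valuations (exV1 ε, exV2) and bids (exV1 ε, exB2), all four functions are GS;
the bid profile is a pure Nash equilibrium in non-exposure bids of every English Walrasian
mechanism on the GS bid space; the allocation gives item 2 (index 1) to agent 1 and item 1
(index 0) to agent 2, with welfare 3 + ε, while OPT = 4. -/
theorem stmt14 (ε : ℝ) (hε : 0 < ε) (hε1 : ε < 1) :
    IsGS (exV1 ε) ∧ IsGS exV2 ∧ IsGS exB2 ∧
    ∀ M : Mechanism 2 2,
      AllocDisjoint M (GSvals 2) → PayNonneg M (GSvals 2) → IsEnglish M (GSvals 2) →
        IsNash M (GSvals 2) ![exV1 ε, exV2] ![exV1 ε, exB2] ∧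
        (∀ i : Fin 2,
          HasExposureFactor M (GSvals 2) (![exV1 ε, exV2] i) i (![exV1 ε, exB2] i) 0) ∧
        M.alloc ![exV1 ε, exB2] 0 = {1} ∧ M.alloc ![exV1 ε, exB2] 1 = {0} ∧
        (∑ i, ![exV1 ε, exV2] i (M.alloc ![exV1 ε, exB2] i)) = 3 + ε ∧
        OPT ![exV1 ε, exV2] = 4 := by
  have hGS1 := exV1_isGS ε hε
  have hGS2 := exV2_isGS
  have hGS3 := exB2_isGS
  refine ⟨hGS1, hGS2, hGS3, ?_⟩
  intro M hdisj hpay hEng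
  obtain ⟨hW, hπ⟩ := hEng
  set b : Fin 2 → Finset (Fin 2) → ℝ := ![exV1 ε, exB2] with hbdef
  have hb0 : b 0 = exV1 ε := rfl
  have hb1 : b 1 = exB2 := rfl
  have hbB : InBidSpace (GSvals 2) b := by
    intro i
    fin_cases i
    · exact hGS1
    · exact hGS3
  -- the maximum welfare under the bids
  have hWb : W b univ = 3 + ε := by
    refine le_antisymm (W_le fun X _ _ => ?_) ?_
    · rw [Fin.sum_univ_two, hb0, hb1]
      linarith [exV1_le ε hε.le (X 0), exB2_le (X 1)]
    · have h := W_ge (b := b) (S := univ) ![{1},{0}] (by decide) (fun i => subset_univ _)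
      rw [Fin.sum_univ_two] at h
      have e0 : b 0 {1} = 1 + ε := by rw [hb0, exV1_s1]
      have e1 : b 1 {0} = 2 := by rw [hb1, exB2_s0]
      rw [show ((![{1},{0}] : Fin 2 → Finset (Fin 2)) 0) = {1} from rfl,
        show ((![{1},{0}] : Fin 2 → Finset (Fin 2)) 1) = {0} from rfl, e0, e1] at h
      linarith
  -- the allocation is forced
  have halloc := hW b hbB
  rw [hWb, Fin.sum_univ_two] at halloc
  have hd01 := hdisj b hbB 0 1 (by decide)
  have hA : M.alloc b 0 = {1} ∧ M.alloc b 1 = {0} := by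
    rcases finset2_cases (M.alloc b 0) with h0 | h0 | h0 | h0 <;>
      rcases finset2_cases (M.alloc b 1) with h1 | h1 | h1 | h1 <;>
      rw [h0, h1] at halloc hd01 <;>
      first
        | exact ⟨h0, h1⟩
        | exact absurd hd01 (by decide)
        | (exfalso; rw [hb0, hb1] at halloc;
           simp only [exV1_empty, exV1_s0, exV1_s1, exV1_pair, exB2_empty, exB2_s0,
             exB2_s1, exB2_pair] at halloc; linarith)
  obtain ⟨hA0, hA1⟩ := hA
  -- Walrasian prices are zero at the equilibrium bids
  have hWm1 : Wmult b (fun _ => 1) = 3 + ε := by rw [Wmult_one_eq_W, hWb]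
  have hWm2 : ∀ j : Fin 2, Wmult b (fun k => if k = j then 2 else 1) = 3 + ε := by
    intro j
    refine le_antisymm (Wmult_le fun X _ => ?_) ?_
    · rw [Fin.sum_univ_two, hb0, hb1]
      linarith [exV1_le ε hε.le (X 0), exB2_le (X 1)]
    · have hfeas : ∀ k : Fin 2, (((univ : Finset (Fin 2)).filter
          fun i => k ∈ (![{1},{0}] : Fin 2 → Finset (Fin 2)) i).card) ≤
          if k = j then 2 else 1 := by revert j; decide
      have h := Wmult_ge (b := b) (x := fun k => if k = j then 2 else 1) ![{1},{0}] hfeas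
      rw [Fin.sum_univ_two] at h
      have e0 : b 0 {1} = 1 + ε := by rw [hb0, exV1_s1]
      have e1 : b 1 {0} = 2 := by rw [hb1, exB2_s0]
      rw [show ((![{1},{0}] : Fin 2 → Finset (Fin 2)) 0) = {1} from rfl,
        show ((![{1},{0}] : Fin 2 → Finset (Fin 2)) 1) = {0} from rfl, e0, e1] at h
      linarith
  have hpay0 : M.pay b 0 = 0 := by
    rw [hπ b hbB 0, hA0, Finset.sum_singleton, hWm2 1, hWm1]
    ring
  have hpay1 : M.pay b 1 = 0 := by
    rw [hπ b hbB 1, hA1, Finset.sum_singleton, hWm2 0, hWm1]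
    ring
  refine ⟨⟨hbB, ?_⟩, ?_, hA0, hA1, ?_, ?_⟩
  -- Nash equilibrium
  · intro i bi' hbi'
    have hupdB : InBidSpace (GSvals 2) (Function.update b i bi') := by
      intro k
      by_cases hk : k = i
      · subst hk; rw [Function.update_self]; exact hbi'
      · rw [Function.update_of_ne hk]; exact hbB k
    fin_cases i
    · -- agent 0 cannot gain
      show util M (exV1 ε) 0 (Function.update b 0 bi') ≤ util M (exV1 ε) 0 b
      unfold util
      rw [hA0, hpay0, exV1_s1]
      have h1 := exV1_le ε hε.le (M.alloc (Function.update b 0 bi') 0)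
      have h2 := hpay (Function.update b 0 bi') hupdB 0
      linarith
    · -- agent 1 cannot gain
      show util M exV2 1 (Function.update b 1 bi') ≤ util M exV2 1 b
      set b' : Fin 2 → Finset (Fin 2) → ℝ := Function.update b 1 bi' with hb'def
      have hb'0 : b' 0 = exV1 ε := by
        rw [hb'def, Function.update_of_ne (by decide)]; exact hb0
      have hb'1 : b' 1 = bi' := by rw [hb'def, Function.update_self]
      unfold util
      rw [hA1, hpay1, exV2_s0]
      have hpge := hpay b' hupdB 1
      rcases finset2_cases (M.alloc b' 1) with hB | hB | hB | hB
      · rw [hB, exV2_empty]; linarith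
      · rw [hB, exV2_s0]; linarith
      · rw [hB, exV2_s1]; linarith
      · -- demand was not reduced: both items won, pay at least 2 + 2ε
        have hA0' : M.alloc b' 0 = ∅ := by
          have hd := hdisj b' hupdB 0 1 (by decide)
          rw [hB] at hd
          rcases finset2_cases (M.alloc b' 0) with h | h | h | h
          · exact h
          all_goals (rw [h] at hd; exact absurd hd (by decide))
        have hsum' := hW b' hupdB
        rw [Fin.sum_univ_two, hA0', hB, hb'0, hb'1, exV1_empty] at hsum'
        -- hsum' : 0 + bi' {0,1} = W b' univ
        have hWm1' : Wmult b' (fun _ => 1) = bi' {0,1} := by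
          rw [Wmult_one_eq_W, ← hsum']; ring
        have hge : ∀ j : Fin 2, 1 + ε + bi' {0,1} ≤
            Wmult b' (fun k => if k = j then 2 else 1) := by
          intro j
          have hfeas : ∀ k : Fin 2, (((univ : Finset (Fin 2)).filter
              fun i => k ∈ (![{j},{0,1}] : Fin 2 → Finset (Fin 2)) i).card) ≤
              if k = j then 2 else 1 := by revert j; decide
          have h := Wmult_ge (b := b') (x := fun k => if k = j then 2 else 1) ![{j},{0,1}] hfeas
          rw [Fin.sum_univ_two] at h
          rw [show ((![{j},{0,1}] : Fin 2 → Finset (Fin 2)) 0) = {j} from rfl,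
            show ((![{j},{0,1}] : Fin 2 → Finset (Fin 2)) 1) = {0,1} from rfl,
            hb'0, hb'1] at h
          have hj : exV1 ε {j} = 1 + ε := by
            fin_cases j
            · exact exV1_s0 ε
            · exact exV1_s1 ε
          rw [hj] at h
          exact h
        have hps := hπ b' hupdB 1
        rw [hB, Finset.sum_pair (by decide : (0 : Fin 2) ≠ 1)] at hps
        rw [hB, exV2_pair, hps]
        have h0 := hge 0
        have h1 := hge 1
        rw [hWm1']
        linarith
  -- non-exposure
  · intro i
    fin_cases i
    · -- agent 0
      show HasExposureFactor M (GSvals 2) (exV1 ε) 0 (exV1 ε) 0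
      intro c hcB hc0
      have hprice : ∀ j : Fin 2,
          Wmult c (fun k => if k = j then 2 else 1) - Wmult c (fun _ => 1) ≤ 1 + ε := by
        intro j
        refine price_le 0 fun A => ?_
        rw [hc0]
        linarith [exV1_le ε hε.le A, exV1_nonneg ε hε.le (A.erase j)]
      have hpaysum := hπ c hcB 0
      rw [hpaysum]
      rw [show (1 : ℝ) + 0 = 1 from by norm_num, one_mul]
      rcases finset2_cases (M.alloc c 0) with hAc | hAc | hAc | hAc
      · rw [hAc, Finset.sum_empty, exV1_empty]
      · rw [hAc, Finset.sum_singleton, exV1_s0]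
        exact hprice 0
      · rw [hAc, Finset.sum_singleton, exV1_s1]
        exact hprice 1
      · -- agent 0 wins everything: the other bid must be the zero valuation
        have hA1c : M.alloc c 1 = ∅ := by
          have hd := hdisj c hcB 1 0 (by decide)
          rw [hAc] at hd
          rcases finset2_cases (M.alloc c 1) with h | h | h | h
          · exact h
          all_goals (rw [h] at hd; exact absurd hd (by decide))
        obtain ⟨⟨hc1emp, hc1mono, hc1nn⟩, -⟩ := hcB 1
        have hsum := hW c hcB
        rw [Fin.sum_univ_two, hAc, hA1c, hc0, exV1_pair, hc1emp] at hsum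
        have hs0 : exV1 ε {1} + c 1 {0} ≤ W c univ := by
          have h := W_ge (b := c) (S := univ) ![{1},{0}] (by decide) (fun i => subset_univ _)
          rw [Fin.sum_univ_two] at h
          rw [show ((![{1},{0}] : Fin 2 → Finset (Fin 2)) 0) = {1} from rfl,
            show ((![{1},{0}] : Fin 2 → Finset (Fin 2)) 1) = {0} from rfl, hc0] at h
          exact h
        have hs1 : exV1 ε {0} + c 1 {1} ≤ W c univ := by
          have h := W_ge (b := c) (S := univ) ![{0},{1}] (by decide) (fun i => subset_univ _)
          rw [Fin.sum_univ_two] at h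
          rw [show ((![{0},{1}] : Fin 2 → Finset (Fin 2)) 0) = {0} from rfl,
            show ((![{0},{1}] : Fin 2 → Finset (Fin 2)) 1) = {1} from rfl, hc0] at h
          exact h
        rw [exV1_s1] at hs0
        rw [exV1_s0] at hs1
        have hsub := gs_subadd (hcB 1)
        have hcle : ∀ Y : Finset (Fin 2), c 1 Y ≤ 0 := by
          intro Y
          rcases finset2_cases Y with rfl | rfl | rfl | rfl
          · rw [hc1emp]
          · linarith
          · linarith
          · linarith
        have hub : ∀ j : Fin 2, Wmult c (fun k => if k = j then 2 else 1) ≤ 1 + ε := by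
          intro j
          refine Wmult_le fun X _ => ?_
          rw [Fin.sum_univ_two, hc0]
          linarith [exV1_le ε hε.le (X 0), hcle (X 1)]
        have hlb : 1 + ε ≤ Wmult c (fun _ => 1) := by
          have h := Wmult_ge (b := c) (x := fun _ => 1) ![{0},∅] (by decide)
          rw [Fin.sum_univ_two] at h
          rw [show ((![{0},∅] : Fin 2 → Finset (Fin 2)) 0) = {0} from rfl,
            show ((![{0},∅] : Fin 2 → Finset (Fin 2)) 1) = ∅ from rfl,
            hc0, exV1_s0, hc1emp] at h
          linarith
        rw [hAc, Finset.sum_pair (by decide : (0 : Fin 2) ≠ 1), exV1_pair]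
        linarith [hub 0, hub 1]
    · -- agent 1
      show HasExposureFactor M (GSvals 2) exV2 1 exB2 0
      intro c hcB hc1
      have hprice : ∀ j : Fin 2,
          Wmult c (fun k => if k = j then 2 else 1) - Wmult c (fun _ => 1) ≤ 2 := by
        intro j
        refine price_le 1 fun A => ?_
        rw [hc1]
        linarith [exB2_le A, exB2_nonneg (A.erase j)]
      rw [hπ c hcB 1, exV2_card]
      calc ∑ j ∈ M.alloc c 1,
            (Wmult c (fun k => if k = j then 2 else 1) - Wmult c (fun _ => 1))
          ≤ ∑ _j ∈ M.alloc c 1, (2 : ℝ) := Finset.sum_le_sum fun j _ => hprice j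
        _ = ((M.alloc c 1).card : ℝ) * 2 := by rw [Finset.sum_const, nsmul_eq_mul]
        _ ≤ (1 + 0) * (2 * ((M.alloc c 1).card : ℝ)) := le_of_eq (by ring)
  -- equilibrium welfare
  · rw [Fin.sum_univ_two]
    rw [show ((![exV1 ε, exV2] : Fin 2 → Finset (Fin 2) → ℝ) 0) = exV1 ε from rfl,
      show ((![exV1 ε, exV2] : Fin 2 → Finset (Fin 2) → ℝ) 1) = exV2 from rfl,
      hA0, hA1, exV1_s1, exV2_s0]
    ring
  -- optimal welfare
  · unfold OPT
    refine le_antisymm (W_le fun X hd _ => ?_) ?_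
    · have hd01' := hd 0 1 (by decide)
      rw [Fin.sum_univ_two]
      rw [show ((![exV1 ε, exV2] : Fin 2 → Finset (Fin 2) → ℝ) 0) = exV1 ε from rfl,
        show ((![exV1 ε, exV2] : Fin 2 → Finset (Fin 2) → ℝ) 1) = exV2 from rfl]
      rcases finset2_cases (X 0) with h0 | h0 | h0 | h0 <;>
        rcases finset2_cases (X 1) with h1 | h1 | h1 | h1 <;>
        rw [h0, h1] at hd01' ⊢ <;>
        first
          | exact absurd hd01' (by decide)
          | (simp only [exV1_empty, exV1_s0, exV1_s1, exV1_pair, exV2_empty, exV2_s0,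
              exV2_s1, exV2_pair]; linarith)
    · have h := W_ge (b := ![exV1 ε, exV2]) (S := univ) ![∅,{0,1}] (by decide)
        (fun i => subset_univ _)
      rw [Fin.sum_univ_two] at h
      rw [show ((![∅,{0,1}] : Fin 2 → Finset (Fin 2)) 0) = ∅ from rfl,
        show ((![∅,{0,1}] : Fin 2 → Finset (Fin 2)) 1) = {0,1} from rfl,
        show ((![exV1 ε, exV2] : Fin 2 → Finset (Fin 2) → ℝ) 0) = exV1 ε from rfl,
        show ((![exV1 ε, exV2] : Fin 2 → Finset (Fin 2) → ℝ) 1) = exV2 from rfl,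
        exV1_empty, exV2_pair] at h
      linarith
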